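/- Let G' be a graph and let G be the split graph with vertex set A ∪ B, where A = V(G') forms a clique, B = {w_e : e ∈ E(G')} forms an independent set, and each w_e for e = uv ∈ E(G') is adjacent exactly to u and v. Then a nonempty subset C ⊆ A is a vertex cover of G' if and only if C is a dominating set of G. -/

import Mathlib

def Dominates {V : Type*} (G : SimpleGraph V) (D : Set V) : Prop :=
  ∀ v, ∃ d ∈ D, d = v ∨ G.Adj d v

/-- The split graph built from `G'`: the vertices of `G'` form a clique `A`, and for each
edge `e` of `G'` there is a vertex `w_e` adjacent exactly to the endpoints of `e`. -/
def splitOf {V : Type*} (G' : SimpleGraph V) : SimpleGraph (V ⊕ G'.edgeSet) where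
  Adj a b :=
    match a, b with
    | Sum.inl u, Sum.inl v => u ≠ v
    | Sum.inl u, Sum.inr e => u ∈ (e : Sym2 V)
    | Sum.inr e, Sum.inl u => u ∈ (e : Sym2 V)
    | Sum.inr _, Sum.inr _ => False
  symm := ⟨by rintro (u | e) (v | f) h <;> simp_all [Ne, eq_comm]⟩
  loopless := ⟨by rintro (u | e) h <;> simp_all⟩

/-- A nonempty subset `C ⊆ A = V(G')` is a vertex cover of `G'` iff it is a dominating
set of the split graph `splitOf G'`. -/
theorem vertexCover_iff_dominates_split {V : Type*} (G' : SimpleGraph V) (C : Set V)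
    (hne : C.Nonempty) :
    (∀ u v, G'.Adj u v → u ∈ C ∨ v ∈ C) ↔ Dominates (splitOf G') (Sum.inl '' C) := by
  constructor
  · intro hcov
    rintro (v | e)
    · obtain ⟨c, hc⟩ := hne
      by_cases h : c = v
      · exact ⟨Sum.inl c, ⟨c, hc, rfl⟩, Or.inl (by rw [h])⟩
      · exact ⟨Sum.inl c, ⟨c, hc, rfl⟩, Or.inr h⟩
    · obtain ⟨e, he⟩ := e
      induction e with
      | h u v =>
        rcases hcov u v he with h | h
        · exact ⟨Sum.inl u, ⟨u, h, rfl⟩, Or.inr (by simp [splitOf])⟩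
        · exact ⟨Sum.inl v, ⟨v, h, rfl⟩, Or.inr (by simp [splitOf])⟩
  · intro hdom u v huv
    obtain ⟨d, ⟨c, hc, rfl⟩, h⟩ := hdom (Sum.inr ⟨s(u, v), huv⟩)
    rcases h with h | h
    · exact absurd h (by simp)
    · simp only [splitOf] at h
      rcases Sym2.mem_iff.mp h with rfl | rfl
      · exact Or.inl hc
      · exact Or.inr hc
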